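/- arXiv:1909.04816 — 2 statements merged into one kernel-verified Lean document; each statement's English description precedes it below -/
import Mathlib

section
/- Let α : ℤ² → {e₁, e₂} be an arrow field on the two-dimensional integer lattice such that every point lies on a bi-infinite trajectory and no two distinct bi-infinite trajectories coalesce. Let R₀ = {k(−e₁+e₂) : −L/2 ≤ k ≤ L/2} be a diagonal segment. Then fixing the value of α at a single point x ∈ R₀ determines α at every point of R₀; specifically, α is constant on R₀. -/
/-- The walk generated by the arrow field `α`. -/
def walk (α : ℤ × ℤ → ℤ × ℤ) (z : ℤ × ℤ) : ℕ → ℤ × ℤ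
  | 0 => z
  | k + 1 => walk α z k + α (walk α z k)

/-- `S` is a bi-infinite trajectory of the arrow field `α`. -/
def IsBiTraj (α : ℤ × ℤ → ℤ × ℤ) (S : Set (ℤ × ℤ)) : Prop :=
  ∃ f : ℤ → ℤ × ℤ, S = Set.range f ∧ ∀ n : ℤ, f (n + 1) = f n + α (f n)

lemma sum_lin (α : ℤ × ℤ → ℤ × ℤ) (hdir : ∀ z, α z = (1, 0) ∨ α z = (0, 1))
    (f : ℤ → ℤ × ℤ) (hf : ∀ n : ℤ, f (n + 1) = f n + α (f n)) :
    ∀ n : ℤ, (f n).1 + (f n).2 = (f 0).1 + (f 0).2 + n := by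
  intro n
  induction n using Int.induction_on with
  | zero => simp
  | succ k ih =>
    rw [hf k]
    rcases hdir (f k) with h | h <;> rw [h] <;> simp [Prod.fst_add, Prod.snd_add] <;> omega
  | pred k ih =>
    have h1 := hf (-(k : ℤ) - 1)
    rw [sub_add_cancel] at h1
    rw [h1] at ih
    rcases hdir (f (-(k : ℤ) - 1)) with h | h <;> rw [h] at ih <;>
      simp [Prod.fst_add, Prod.snd_add] at ih ⊢ <;> omega

lemma key (α : ℤ × ℤ → ℤ × ℤ)
    (hdir : ∀ z, α z = (1, 0) ∨ α z = (0, 1))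
    (hbi : ∀ z : ℤ × ℤ, ∃ S : Set (ℤ × ℤ), IsBiTraj α S ∧ z ∈ S)
    (hnocoal : ∀ S T : Set (ℤ × ℤ), IsBiTraj α S → IsBiTraj α T →
      (S ∩ T).Nonempty → S = T)
    (z : ℤ × ℤ) : α z = α (z + (-1, 1)) := by
  set w : ℤ × ℤ := z + (-1, 1) with hw
  -- the point u = z + (0,1) has a predecessor, which is z or w
  obtain ⟨S, ⟨f, hS, hf⟩, hu⟩ := hbi (z + (0, 1))
  rw [hS] at hu
  obtain ⟨n, hn⟩ := hu
  have hpred := hf (n - 1)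
  rw [sub_add_cancel, hn] at hpred
  have hstep : α z = (0, 1) ∨ α w = (1, 0) := by
    rcases hdir (f (n - 1)) with h | h
    · right
      have hfw : f (n - 1) = w := by
        rw [h] at hpred
        have h1 := congrArg Prod.fst hpred
        have h2 := congrArg Prod.snd hpred
        simp [Prod.fst_add, Prod.snd_add] at h1 h2
        rw [hw, Prod.ext_iff]
        simp [Prod.fst_add, Prod.snd_add]
        omega
      rw [← hfw, h]
    · left
      have hfz : f (n - 1) = z := by
        rw [h] at hpred
        have h1 := congrArg Prod.fst hpred
        have h2 := congrArg Prod.snd hpred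
        simp [Prod.fst_add, Prod.snd_add] at h1 h2
        rw [Prod.ext_iff]
        omega
      rw [← hfz, h]
  have hne : ¬ (α z = (0, 1) ∧ α w = (1, 0)) := by
    rintro ⟨hz, hwa⟩
    obtain ⟨S1, hS1, hzS⟩ := hbi z
    obtain ⟨T1, hT1, hwT⟩ := hbi w
    obtain ⟨g, hgS, hg⟩ := hS1
    obtain ⟨g', hgT, hg'⟩ := hT1
    have hint : (S1 ∩ T1).Nonempty := by
      rw [hgS] at hzS; obtain ⟨a, ha⟩ := hzS
      rw [hgT] at hwT; obtain ⟨b, hb⟩ := hwT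
      refine ⟨z + (0, 1), ?_, ?_⟩
      · rw [hgS]
        exact ⟨a + 1, by rw [hg a, ha, hz]⟩
      · rw [hgT]
        refine ⟨b + 1, by rw [hg' b, hb, hwa, hw]; simp [Prod.ext_iff]⟩
    have hST : S1 = T1 := hnocoal S1 T1 ⟨g, hgS, hg⟩ ⟨g', hgT, hg'⟩ hint
    -- z and w both in range g, equal coordinate sums, so equal
    rw [hgS] at hzS
    have hwS : w ∈ S1 := by rw [hST]; exact hwT
    rw [hgS] at hwS
    obtain ⟨a, ha⟩ := hzS
    obtain ⟨b, hb⟩ := hwS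
    have s1 := sum_lin α hdir g hg a
    have s2 := sum_lin α hdir g hg b
    rw [ha] at s1; rw [hb] at s2
    have hsum : w.1 + w.2 = z.1 + z.2 := by
      simp [hw, Prod.fst_add, Prod.snd_add]; ring
    have hab : a = b := by omega
    have hzw : z = w := by rw [← ha, ← hb, hab]
    have hcf := congrArg Prod.fst hzw
    rw [hw] at hcf
    simp [Prod.fst_add] at hcf
  rcases hdir z with h1 | h1 <;> rcases hdir w with h2 | h2
  · rw [h1, h2]
  · exfalso; rcases hstep with h | h
    · rw [h1] at h; simp [Prod.ext_iff] at h
    · rw [h2] at h; simp [Prod.ext_iff] at h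
  · exact absurd ⟨h1, h2⟩ hne
  · rw [h1, h2]

/-- for a directed arrow field on ℤ² in which every point lies on a
bi-infinite trajectory and no two distinct bi-infinite trajectories share a
point, the arrow field is constant on any diagonal segment
`R₀ = {k(−e₁+e₂) : −L/2 ≤ k ≤ L/2}`. -/
theorem stmt_1 (α : ℤ × ℤ → ℤ × ℤ)
    (hdir : ∀ z, α z = (1, 0) ∨ α z = (0, 1))
    (hbi : ∀ z : ℤ × ℤ, ∃ S : Set (ℤ × ℤ), IsBiTraj α S ∧ z ∈ S)
    (hnocoal : ∀ S T : Set (ℤ × ℤ), IsBiTraj α S → IsBiTraj α T →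
      (S ∩ T).Nonempty → S = T)
    (L : ℕ) :
    ∀ k k' : ℤ, |k| ≤ (L : ℤ) / 2 → |k'| ≤ (L : ℤ) / 2 →
      α (k • ((-1, 1) : ℤ × ℤ)) = α (k' • ((-1, 1) : ℤ × ℤ)) := by
  have aux : ∀ k : ℤ, α (k • ((-1, 1) : ℤ × ℤ)) = α ((0 : ℤ) • ((-1, 1) : ℤ × ℤ)) := by
    intro k
    induction k using Int.induction_on with
    | zero => rfl
    | succ m ih =>
      rw [← ih]
      have : ((m : ℤ) + 1) • ((-1, 1) : ℤ × ℤ) = (m : ℤ) • ((-1, 1) : ℤ × ℤ) + (-1, 1) := by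
        rw [add_smul, one_smul]
      rw [this]
      exact (key α hdir hbi hnocoal _).symm
    | pred m ih =>
      rw [← ih]
      have : (-(m : ℤ)) • ((-1, 1) : ℤ × ℤ) = (-(m : ℤ) - 1) • ((-1, 1) : ℤ × ℤ) + (-1, 1) := by
        rw [sub_smul, one_smul]; abel
      rw [this]
      exact key α hdir hbi hnocoal _
  intro k k' _ _
  rw [aux k, aux k']
end

section
/- For j ≤ √ε·B, k ≤ B (where B = |∂R'| is of order L^{d−1}), the quantity binom(B; j, k, B−j−k) · (e^{3εL})^k · (e^{3L log|A|})^j is bounded above by 2^B · exp(C₁√ε L^d) for a constant C₁ depending only on |A| and d (not on ε or L), provided L^{d-1} ≤ L^d and B ≤ c·L^{d−1}. -/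
lemma aux_choose_le_two_pow (n k : ℕ) : n.choose k ≤ 2 ^ n := by
  by_cases h : k ≤ n
  · calc n.choose k ≤ ∑ i ∈ Finset.range (n + 1), n.choose i :=
        Finset.single_le_sum (fun i _ => Nat.zero_le _)
          (Finset.mem_range.mpr (Nat.lt_succ_of_le h))
    _ = 2 ^ n := Nat.sum_range_choose n
  · simp [Nat.choose_eq_zero_of_lt (lt_of_not_ge h)]

lemma aux_le_exp_log (x : ℝ) : x ≤ Real.exp (Real.log x) := by
  rcases le_or_gt x 0 with h | h
  · exact h.trans (Real.exp_pos _).le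
  · rw [Real.exp_log h]

/-- the trinomial configuration-counting estimate.  For
`j ≤ √ε·B`, `k ≤ B` and `B ≤ c·L^{d−1}`, the quantity
`binom(B; j, k, B−j−k)·(e^{3εL})^k·(e^{3L log|A|})^j` is at most
`2^B·exp(C₁ √ε L^d)` for a constant `C₁` depending only on `|A|`, `d` (and the
boundary constant `c`), not on `ε` or `L`. -/
theorem stmt_6 (Acard d : ℕ) (hd : 1 ≤ d) (c : ℝ) (hc : 0 < c) :
    ∃ C₁ : ℝ, 0 < C₁ ∧
      ∀ (ε : ℝ), 0 < ε → ε ≤ 1 → ∀ (L B j k : ℕ), 1 ≤ L →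
        (B : ℝ) ≤ c * (L : ℝ) ^ (d - 1) →
        (j : ℝ) ≤ Real.sqrt ε * B → k ≤ B → j + k ≤ B →
        (L : ℝ) ^ (d - 1) ≤ (L : ℝ) ^ d →
        ((B.choose j : ℝ) * ((B - j).choose k : ℝ)) *
            Real.exp (3 * ε * L) ^ k * Real.exp (3 * L * Real.log Acard) ^ j
          ≤ 2 ^ B * Real.exp (C₁ * Real.sqrt ε * (L : ℝ) ^ d) := by
  set M : ℝ := max (Real.log c) 0 with hM
  set K : ℝ := Real.log Acard with hK
  have hM0 : 0 ≤ M := le_max_right _ _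
  have hK0 : 0 ≤ K := Real.log_natCast_nonneg _
  refine ⟨c * (M + d + 3 + 3 * K), by positivity, ?_⟩
  intro ε hε0 hε1 L B j k hL hB hj hk hjk hLpow
  set s : ℝ := Real.sqrt ε with hs
  have hs0 : 0 < s := Real.sqrt_pos.mpr hε0
  have hs1 : s ≤ 1 := by
    rw [hs, show (1 : ℝ) = Real.sqrt 1 by simp]
    exact Real.sqrt_le_sqrt hε1
  have hεs : ε ≤ s := by
    nlinarith [Real.sq_sqrt hε0.le, hs0]
  have hL1 : (1 : ℝ) ≤ (L : ℝ) := by exact_mod_cast hL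
  set LB : ℝ := (L : ℝ) ^ (d - 1) with hLB
  set LD : ℝ := (L : ℝ) ^ d with hLD
  have hLB0 : (1 : ℝ) ≤ LB := by
    calc (1 : ℝ) = 1 ^ (d - 1) := (one_pow _).symm
      _ ≤ (L : ℝ) ^ (d - 1) := pow_le_pow_left₀ (by norm_num) hL1 _
  have hLD1 : (1 : ℝ) ≤ LD := hLB0.trans hLpow
  have hLmul : LB * (L : ℝ) = LD := by
    rw [hLB, hLD, ← pow_succ, Nat.sub_add_cancel hd]
  -- bound on log B
  have hlogB : Real.log B ≤ M + d * L := by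
    rcases Nat.eq_zero_or_pos B with hB0 | hB0
    · simp [hB0]
      positivity
    · have hBpos : (0 : ℝ) < B := by exact_mod_cast hB0
      have h1 : Real.log B ≤ Real.log (c * LB) :=
        Real.log_le_log hBpos hB
      have h2 : Real.log (c * LB) = Real.log c + (d - 1 : ℕ) * Real.log L := by
        rw [Real.log_mul (ne_of_gt hc) (by positivity), hLB, Real.log_pow]
      have hlogL : Real.log L ≤ L := (Real.log_le_sub_one_of_pos (by linarith)).trans (by linarith)
      have hlogL0 : 0 ≤ Real.log L := Real.log_nonneg hL1
      have h3 : ((d - 1 : ℕ) : ℝ) * Real.log L ≤ (d : ℝ) * L := by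
        have hdd : ((d - 1 : ℕ) : ℝ) ≤ (d : ℝ) := by exact_mod_cast Nat.sub_le d 1
        nlinarith
      have h4 : Real.log c ≤ M := le_max_left _ _
      linarith
  -- bound pieces
  have hj0 : (0 : ℝ) ≤ (j : ℝ) := Nat.cast_nonneg j
  have hk0 : (0 : ℝ) ≤ (k : ℝ) := Nat.cast_nonneg k
  have hBnn : (0 : ℝ) ≤ (B : ℝ) := Nat.cast_nonneg B
  have hkB : (k : ℝ) ≤ (B : ℝ) := by exact_mod_cast hk
  have hBcLB : (B : ℝ) ≤ c * LB := hB
  -- exponent bound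
  have hMdL0 : 0 ≤ M + (d : ℝ) * L := by positivity
  have e1 : (j : ℝ) * Real.log B ≤ s * (c * LB) * (M + d * L) := by
    have hjb : (j : ℝ) ≤ s * (c * LB) :=
      hj.trans (mul_le_mul_of_nonneg_left hBcLB hs0.le)
    calc (j : ℝ) * Real.log B ≤ (j : ℝ) * (M + d * L) :=
        mul_le_mul_of_nonneg_left hlogB hj0
      _ ≤ s * (c * LB) * (M + d * L) := mul_le_mul_of_nonneg_right hjb hMdL0
  have e1' : s * (c * LB) * (M + d * L) ≤ s * (c * M + c * d) * LD := by
    have h1 : LB * M ≤ LD * M := mul_le_mul_of_nonneg_right hLpow hM0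
    have h3 : s * c * (LB * M) ≤ s * c * (LD * M) :=
      mul_le_mul_of_nonneg_left h1 (by positivity)
    calc s * (c * LB) * (M + d * L)
        = s * c * (LB * M) + s * c * (d : ℝ) * (LB * L) := by ring
      _ = s * c * (LB * M) + s * c * (d : ℝ) * LD := by rw [hLmul]
      _ ≤ s * c * (LD * M) + s * c * (d : ℝ) * LD := by linarith
      _ = s * (c * M + c * d) * LD := by ring
  have e2 : 3 * ε * L * k ≤ 3 * c * s * LD := by
    have h1 : ε * (k : ℝ) ≤ s * (c * LB) := by
      calc ε * (k : ℝ) ≤ s * k := mul_le_mul_of_nonneg_right hεs hk0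
        _ ≤ s * (c * LB) := mul_le_mul_of_nonneg_left (hkB.trans hBcLB) hs0.le
    calc 3 * ε * L * k = 3 * (ε * k) * L := by ring
      _ ≤ 3 * (s * (c * LB)) * L := by
          apply mul_le_mul_of_nonneg_right _ (by positivity)
          linarith
      _ = 3 * c * s * LD := by rw [← hLmul]; ring
  have e3 : 3 * (L : ℝ) * K * j ≤ 3 * c * K * s * LD := by
    have hjb : (j : ℝ) ≤ s * (c * LB) :=
      hj.trans (mul_le_mul_of_nonneg_left hBcLB hs0.le)
    calc 3 * (L : ℝ) * K * j ≤ 3 * (L : ℝ) * K * (s * (c * LB)) :=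
        mul_le_mul_of_nonneg_left hjb (by positivity)
      _ = 3 * c * K * s * (LB * L) := by ring
      _ = 3 * c * K * s * LD := by rw [hLmul]
  have hexp : (j : ℝ) * Real.log B + 3 * ε * L * k + 3 * L * K * j
      ≤ c * (M + d + 3 + 3 * K) * s * LD := by
    have h := e1.trans e1'
    have : s * (c * M + c * d) * LD + 3 * c * s * LD + 3 * c * K * s * LD
        = c * (M + d + 3 + 3 * K) * s * LD := by ring
    linarith
  -- now the main chain
  have hchoose2 : ((B - j).choose k : ℝ) ≤ 2 ^ B := by
    have h1 : (B - j).choose k ≤ 2 ^ (B - j) := aux_choose_le_two_pow _ _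
    have h2 : (2 : ℕ) ^ (B - j) ≤ 2 ^ B := Nat.pow_le_pow_right (by norm_num) (Nat.sub_le _ _)
    exact_mod_cast h1.trans h2
  have hchoose1 : (B.choose j : ℝ) ≤ Real.exp ((j : ℝ) * Real.log B) := by
    have h1 : (B.choose j : ℝ) ≤ (B : ℝ) ^ j := by exact_mod_cast Nat.choose_le_pow B j
    have h2 : (B : ℝ) ^ j ≤ Real.exp (Real.log B) ^ j :=
      pow_le_pow_left₀ hBnn (aux_le_exp_log _) j
    rw [← Real.exp_nat_mul] at h2
    calc (B.choose j : ℝ) ≤ (B : ℝ) ^ j := h1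
      _ ≤ Real.exp (j * Real.log B) := h2
  have hE1 : Real.exp (3 * ε * L) ^ k = Real.exp (3 * ε * L * k) := by
    rw [← Real.exp_nat_mul]; ring_nf
  have hE2 : Real.exp (3 * (L : ℝ) * K) ^ j = Real.exp (3 * L * K * j) := by
    rw [← Real.exp_nat_mul]; ring_nf
  calc ((B.choose j : ℝ) * ((B - j).choose k : ℝ)) *
        Real.exp (3 * ε * L) ^ k * Real.exp (3 * L * K) ^ j
      = ((B - j).choose k : ℝ) * ((B.choose j : ℝ) *
          (Real.exp (3 * ε * L * k) * Real.exp (3 * L * K * j))) := by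
        rw [hE1, hE2]; ring
    _ ≤ 2 ^ B * (Real.exp ((j : ℝ) * Real.log B) *
          (Real.exp (3 * ε * L * k) * Real.exp (3 * L * K * j))) := by
        apply mul_le_mul hchoose2 _ (by positivity) (by positivity)
        exact mul_le_mul_of_nonneg_right hchoose1 (by positivity)
    _ = 2 ^ B * Real.exp ((j : ℝ) * Real.log B + 3 * ε * L * k + 3 * L * K * j) := by
        rw [← Real.exp_add, ← Real.exp_add, add_assoc]
    _ ≤ 2 ^ B * Real.exp (c * (M + d + 3 + 3 * K) * s * LD) := by
        have : (0:ℝ) < 2 ^ B := by positivity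
        exact mul_le_mul_of_nonneg_left (Real.exp_le_exp.mpr hexp) this.le
end
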